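/- arXiv:1508.05157 — 2 statements merged into one kernel-verified Lean document; each statement's English description precedes it below -/
import Mathlib

section
/- For a forest F with n vertices, the inversion enumerator summed over all labelings equals (n!/∏_v h_v) · ∏_v [h_v]_q, where [m]_q = 1 + q + ... + q^{m-1}. -/
open Finset

open scoped Classical

noncomputable section

variable {n : ℕ}

/-- `u <_F v` : strictly below in the forest order. -/
def strictR (r : Fin n → Fin n → Prop) (u v : Fin n) : Prop := r u v ∧ u ≠ v

/-- A naturally indexed plane forest structure on `Fin n`: a partial order whose
principal up-sets are chains (roots maximal), with natural indexing. -/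
def IsForest (r : Fin n → Fin n → Prop) : Prop :=
  IsPartialOrder (Fin n) r ∧ (∀ v u u', r v u → r v u' → r u u' ∨ r u' u) ∧
    ∀ u v, r u v → u ≤ v

/-- `h_v`: size of the principal order ideal generated by `v`. -/
def hook (r : Fin n → Fin n → Prop) (v : Fin n) : ℕ :=
  (univ.filter fun u => r u v).card

/-- q-integer `[m] = 1 + q + ... + q^(m-1)`. -/
def qInt {R : Type*} [CommRing R] (q : R) (m : ℕ) : R := ∑ i ∈ Finset.range m, q ^ i

/-- inversions of an (unsigned) labeling. -/
def invF (r : Fin n → Fin n → Prop) (w : Equiv.Perm (Fin n)) : ℕ :=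
  (univ.filter fun uv : Fin n × Fin n => strictR r uv.1 uv.2 ∧ w uv.2 < w uv.1).card

/-- a natural (order-preserving) labeling. -/
def NaturalL (r : Fin n → Fin n → Prop) (w : Equiv.Perm (Fin n)) : Prop :=
  ∀ u v, strictR r u v → w u < w v

/-- bottom-to-top maximum positions. -/
def BtmaxF (r : Fin n → Fin n → Prop) (w : Equiv.Perm (Fin n)) : Finset (Fin n) :=
  univ.filter fun v => ∀ u, strictR r u v → w u < w v

/-- label (in 1..n, with convention n+1 for roots) of the parent of `v`;
for a naturally indexed forest the parent of `v` is the minimal-index vertex strictly above `v`. -/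
def parentW (r : Fin n → Fin n → Prop) (w : Equiv.Perm (Fin n)) (v : Fin n) : ℕ :=
  if h : (univ.filter fun u => strictR r v u).Nonempty then
    (w ((univ.filter fun u => strictR r v u).min' h) : ℕ) + 1
  else n + 1

/-- major index: sum of hooks over descents. -/
def majF (r : Fin n → Fin n → Prop) (w : Equiv.Perm (Fin n)) : ℕ :=
  ∑ v ∈ univ.filter (fun v => parentW r w v < (w v : ℕ) + 1), hook r v

/-- M-code of a labeled forest. -/
def mcodeF (r : Fin n → Fin n → Prop) (w : Equiv.Perm (Fin n)) (i : Fin n) : ℕ :=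
  if (w i : ℕ) + 1 < parentW r w i then
    (univ.filter fun u => strictR r u i ∧ (w i : ℕ) + 1 ≤ (w u : ℕ) + 1 ∧
      (w u : ℕ) + 1 ≤ parentW r w i).card
  else
    (univ.filter fun u => strictR r u i ∧ ¬(parentW r w i ≤ (w u : ℕ) + 1 ∧
      (w u : ℕ) + 1 ≤ (w i : ℕ) + 1)).card

/-- cyclic bottom-to-top maxima. -/
def CbtmaxF (r : Fin n → Fin n → Prop) (w : Equiv.Perm (Fin n)) : Finset (Fin n) :=
  univ.filter fun v =>
    if (w v : ℕ) + 1 < parentW r w v then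
      ∀ u, strictR r u v → ¬((w v : ℕ) + 1 ≤ (w u : ℕ) + 1 ∧ (w u : ℕ) + 1 ≤ parentW r w v)
    else
      ∀ u, strictR r u v → (parentW r w v ≤ (w u : ℕ) + 1 ∧ (w u : ℕ) + 1 ≤ (w v : ℕ) + 1)

/-! ### Signed labelings, encoded as a permutation together with a sign function.
`wVal (σ, ε)` is the corresponding signed labeling `V(F) → {±1, …, ±n}`;
this is a bijective encoding of the set `W_B(F)` of signed labelings. -/

def wVal (p : Equiv.Perm (Fin n) × (Fin n → Bool)) (v : Fin n) : ℤ :=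
  (if p.2 v then -1 else 1) * ((p.1 v : ℤ) + 1)

/-- number of negative labels. -/
def n1F (w : Fin n → ℤ) : ℕ := (univ.filter fun v => w v < 0).card

/-- inversions of a signed labeling. -/
def invSF (r : Fin n → Fin n → Prop) (w : Fin n → ℤ) : ℕ :=
  (univ.filter fun uv : Fin n × Fin n => strictR r uv.1 uv.2 ∧ w uv.2 < w uv.1).card

def n2F (r : Fin n → Fin n → Prop) (w : Fin n → ℤ) : ℕ :=
  (univ.filter fun uv : Fin n × Fin n => strictR r uv.1 uv.2 ∧ w uv.1 + w uv.2 < 0).card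

def invBF (r : Fin n → Fin n → Prop) (w : Fin n → ℤ) : ℕ := invSF r w + n1F w + n2F r w

def invDF (r : Fin n → Fin n → Prop) (w : Fin n → ℤ) : ℕ := invSF r w + n2F r w

/-- the A-code of a signed labeled forest. -/
def acodeF (r : Fin n → Fin n → Prop) (w : Fin n → ℤ) (i : Fin n) : ℕ :=
  (univ.filter fun u => strictR r u i ∧ w i < w u).card +
  (univ.filter fun u => strictR r u i ∧ w u + w i < 0).card +
  (if w i < 0 then 1 else 0)

/-- signed bottom-to-top maximum positions. -/
def BtmaxBF (r : Fin n → Fin n → Prop) (w : Fin n → ℤ) : Finset (Fin n) :=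
  univ.filter fun v => 0 < w v ∧ ∀ u, strictR r u v → |w u| < w v

def leafF (r : Fin n → Fin n → Prop) (v : Fin n) : Prop := ∀ u, ¬ strictR r u v

/-- type D bottom-to-top maximum positions. -/
def BtmaxDF (r : Fin n → Fin n → Prop) (w : Fin n → ℤ) : Finset (Fin n) :=
  univ.filter fun v => ¬ leafF r v ∧ 0 < w v ∧ ∀ u, strictR r u v → |w u| < w v

/-! ### The map φ: one sorting step towards a natural labeling, recording the A-code. -/

def stepA (r : Fin n → Fin n → Prop) (i : Fin n) (w : Fin n → ℤ) : Fin n → ℤ :=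
  let A := (univ.filter fun u => r u i).image fun u => (w u).natAbs
  let M := A.max.getD 0
  let l := (A.erase M).sort (· ≤ ·)
  fun u =>
    if u = i then (M : ℤ)
    else if strictR r u i then
      (if w u < 0 then -1 else 1) *
        (l.getD ((univ.filter fun u' => strictR r u' i ∧ (w u').natAbs < (w u).natAbs).card) 0)
    else w u

/-- processing vertices `v_n, v_{n-1}, …, v_1` yields the natural labeling `w'`. -/
def sortA (r : Fin n → Fin n → Prop) (w : Fin n → ℤ) : Fin n → ℤ :=
  ((List.finRange n).reverse).foldl (fun w i => stepA r i w) w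

/-! ### The sorting algorithm for the sorting index. -/

/-- standardized label of `x` in the subtree rooted at `u`. -/
def stdVal (r : Fin n → Fin n → Prop) (u : Fin n) (w : Fin n → ℤ) (x : Fin n) : ℤ :=
  (if w x < 0 then -1 else 1) * (((univ.filter fun y => r y u ∧ |w y| < |w x|).card : ℤ) + 1)

/-- one step of the forest sorting algorithm (placing value `i+1`); the state is
(current labeling, recorded B-code, running total). -/
def sortStepB (r : Fin n → Fin n → Prop) (i : Fin n)
    (s : (Fin n → ℤ) × (Fin n → ℤ) × ℤ) : (Fin n → ℤ) × (Fin n → ℤ) × ℤ :=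
  let w := s.1
  let v := ((univ.filter fun x => |w x| = (i : ℤ) + 1).max).getD i
  let u := ((univ.filter fun x => r v x ∧ |w x| ≤ (i : ℤ) + 1).max).getD i
  let amt : ℤ := |stdVal r u w v| - stdVal r u w u - (if w u < 0 then 1 else 0)
  let w' := if 0 < w v then Function.update (Function.update w u (w v)) v (w u)
            else Function.update (Function.update w u (-(w v))) v (-(w u))
  (w', Function.update s.2.1 u amt, s.2.2 + amt)

def runB (r : Fin n → Fin n → Prop) (w : Fin n → ℤ) : (Fin n → ℤ) × (Fin n → ℤ) × ℤ :=
  ((List.finRange n).reverse).foldl (fun s i => sortStepB r i s) (w, fun _ => (0 : ℤ), 0)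

/-- the natural labeling produced by the sorting algorithm. -/
def sortedB (r : Fin n → Fin n → Prop) (w : Fin n → ℤ) : Fin n → ℤ := (runB r w).1

/-- B-code: `b_i` = amount contributed at the step in which `u = v_i`. -/
def bcodeB (r : Fin n → Fin n → Prop) (w : Fin n → ℤ) : Fin n → ℤ := (runB r w).2.1

/-- the sorting index of a signed labeled forest. -/
def sorBF (r : Fin n → Fin n → Prop) (w : Fin n → ℤ) : ℤ := (runB r w).2.2

/-! ### Cycles of signed permutations. -/

/-- the extension of `g : Fin n → ℤ` (a signed permutation written in one-line notation,
`g i` = image of `i+1`) to `{±1, …, ±n} ⊆ ℤ`. -/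
def extB (g : Fin n → ℤ) : ℤ → ℤ := fun k =>
  if h : 0 < k ∧ k ≤ (n : ℤ) then g ⟨k.toNat - 1, by omega⟩
  else if h' : -(n : ℤ) ≤ k ∧ k < 0 then -g ⟨(-k).toNat - 1, by omega⟩
  else k

/-- absolute values of the minimal-in-absolute-value elements of balanced cycles. -/
def CycBperm (g : Fin n → ℤ) : Finset ℕ :=
  (Finset.Icc 1 n).filter fun m =>
    (∀ j, j ≤ 2 * n → (extB g)^[j] (m : ℤ) ≠ -(m : ℤ)) ∧
    ∀ j, j ≤ 2 * n → (m : ℤ) ≤ |(extB g)^[j] (m : ℤ)|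

/-- the signed permutation `w ∘ w'⁻¹`, where `w'` is the sorted (natural) labeling. -/
def gOf (r : Fin n → Fin n → Prop) (w : Fin n → ℤ) : Fin n → ℤ := fun i =>
  w (((univ.filter fun v => sortedB r w v = (i : ℤ) + 1).max).getD i)

/-- type B minimal cycle vertices of a signed labeled forest. -/
def CycBF (r : Fin n → Fin n → Prop) (w : Fin n → ℤ) : Finset (Fin n) :=
  univ.filter fun v => (sortedB r w v).toNat ∈ CycBperm (gOf r w)

/-! ### Signed permutations as words. -/

/-- the inverse of the signed permutation `g`. -/
def ginv (g : Fin n → ℤ) (i : Fin n) : ℤ :=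
  let j := ((univ.filter fun x => |g x| = (i : ℤ) + 1).max).getD i
  if 0 < g j then (j : ℤ) + 1 else -((j : ℤ) + 1)

def invP (σ : Equiv.Perm (Fin n)) : ℕ :=
  (univ.filter fun ij : Fin n × Fin n => ij.1 < ij.2 ∧ σ ij.2 < σ ij.1).card

def invL (g : Fin n → ℤ) : ℕ :=
  (univ.filter fun ij : Fin n × Fin n => ij.1 < ij.2 ∧ g ij.2 < g ij.1).card

def n2L (g : Fin n → ℤ) : ℕ :=
  (univ.filter fun ij : Fin n × Fin n => ij.1 < ij.2 ∧ g ij.1 + g ij.2 < 0).card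

/-- one step of Straight Selection Sort for signed permutations (placing value `i+1`). -/
def sorStepP (i : Fin n) (s : (Fin n → ℤ) × ℤ) : (Fin n → ℤ) × ℤ :=
  let g := s.1
  let j := ((univ.filter fun x => |g x| = (i : ℤ) + 1).max).getD i
  let amt : ℤ := if 0 < g j then ((i : ℤ) + 1) - ((j : ℤ) + 1)
                 else ((i : ℤ) + 1) + ((j : ℤ) + 1) - 1
  let g' := if 0 < g j then Function.update (Function.update g j (g i)) i (g j)
            else Function.update (Function.update g j (-(g i))) i (-(g j))
  (g', s.2 + amt)

/-- the sorting index of a signed permutation. -/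
def sorBperm (g : Fin n → ℤ) : ℤ :=
  (((List.finRange n).reverse).foldl (fun s i => sorStepP i s) (g, 0)).2

end

noncomputable section Aux
open Polynomial

variable {m : ℕ}

private lemma fst_refl {n : ℕ} {r : Fin n → Fin n → Prop} (hF : IsForest r) (v : Fin n) :
    r v v := hF.1.refl v

private lemma fst_trans {n : ℕ} {r : Fin n → Fin n → Prop} (hF : IsForest r) {a b c : Fin n}
    (h1 : r a b) (h2 : r b c) : r a c := hF.1.trans a b c h1 h2

/-- restriction of the forest to `Fin m` (drop the last vertex). -/
def rRes (r : Fin (m+1) → Fin (m+1) → Prop) : Fin m → Fin m → Prop :=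
  fun u v => r u.castSucc v.castSucc

/-- strict ideal of the last vertex, pulled back to `Fin m`. -/
def Dset (r : Fin (m+1) → Fin (m+1) → Prop) : Finset (Fin m) :=
  univ.filter fun u => strictR r u.castSucc (Fin.last m)

lemma mem_Dset {r : Fin (m+1) → Fin (m+1) → Prop} {u : Fin m} :
    u ∈ Dset r ↔ strictR r u.castSucc (Fin.last m) := by simp [Dset]

lemma last_max {r : Fin (m+1) → Fin (m+1) → Prop} (hF : IsForest r) {x : Fin (m+1)}
    (h : r (Fin.last m) x) : x = Fin.last m := Fin.last_le_iff.mp (hF.2.2 _ _ h)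

lemma strictR_rRes {r : Fin (m+1) → Fin (m+1) → Prop} {u v : Fin m} :
    strictR (rRes r) u v ↔ strictR r u.castSucc v.castSucc := by
  unfold strictR rRes
  simp [Fin.castSucc_inj, ne_eq]

lemma isForest_rRes (r : Fin (m+1) → Fin (m+1) → Prop) (hF : IsForest r) :
    IsForest (rRes r) := by
  obtain ⟨hpo, hchain, hidx⟩ := hF
  refine ⟨?_, fun v u u' h1 h2 => hchain _ _ _ h1 h2,
    fun u v h => Fin.castSucc_le_castSucc_iff.mp (hidx _ _ h)⟩
  exact { refl := fun a => hpo.refl _,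
          trans := fun a b c h1 h2 => hpo.trans _ _ _ h1 h2,
          antisymm := fun a b h1 h2 => Fin.castSucc_injective m (hpo.antisymm _ _ h1 h2) }

lemma hook_castSucc (r : Fin (m+1) → Fin (m+1) → Prop) (hF : IsForest r) (v : Fin m) :
    hook r v.castSucc = hook (rRes r) v := by
  unfold hook
  refine (Finset.card_nbij Fin.castSucc ?_ ?_ ?_).symm
  · intro a ha
    simp only [coe_filter, Set.mem_setOf_eq, mem_filter, mem_univ, true_and] at ha ⊢
    exact ha
  · exact ((Fin.castSucc_injective m).injOn)
  · intro x hx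
    simp only [coe_filter, Set.mem_setOf_eq, mem_univ, true_and] at hx
    have hxl : x ≠ Fin.last m := by
      intro hc
      subst hc
      have := last_max hF hx
      exact absurd this (Fin.castSucc_lt_last v).ne
    obtain ⟨j, rfl⟩ := Fin.exists_castSucc_eq.mpr hxl
    refine ⟨j, ?_, rfl⟩
    simp only [coe_filter, Set.mem_setOf_eq, mem_univ, true_and]
    exact hx

lemma hook_last (r : Fin (m+1) → Fin (m+1) → Prop) (hF : IsForest r) :
    hook r (Fin.last m) = (Dset r).card + 1 := by
  unfold hook
  have hset : (univ.filter fun u => r u (Fin.last m))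
      = insert (Fin.last m) ((Dset r).image Fin.castSucc) := by
    ext x
    simp only [mem_filter, mem_univ, true_and, mem_insert, mem_image, mem_Dset, strictR]
    constructor
    · intro hx
      by_cases hxl : x = Fin.last m
      · exact Or.inl hxl
      · obtain ⟨j, rfl⟩ := Fin.exists_castSucc_eq.mpr hxl
        exact Or.inr ⟨j, ⟨hx, hxl⟩, rfl⟩
    · rintro (rfl | ⟨j, ⟨hj, _⟩, rfl⟩)
      · exact fst_refl hF _
      · exact hj
  rw [hset, card_insert_of_notMem, card_image_of_injective _ (Fin.castSucc_injective m)]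
  intro hc
  obtain ⟨j, _, hj⟩ := mem_image.mp hc
  exact absurd hj (Fin.castSucc_lt_last j).ne

lemma mem_Dset_iff {r : Fin (m+1) → Fin (m+1) → Prop} (hF : IsForest r) {u v : Fin m}
    (h : strictR (rRes r) u v) : (u ∈ Dset r ↔ v ∈ Dset r) := by
  have hr : r u.castSucc v.castSucc := h.1
  simp only [mem_Dset, strictR]
  constructor
  · rintro ⟨hu, -⟩
    rcases hF.2.1 u.castSucc v.castSucc (Fin.last m) hr hu with hc | hc
    · exact ⟨hc, (Fin.castSucc_lt_last v).ne⟩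
    · exact absurd (last_max hF hc) (Fin.castSucc_lt_last v).ne
  · rintro ⟨hv, -⟩
    exact ⟨fst_trans hF hr hv, (Fin.castSucc_lt_last u).ne⟩

/-! ### the decomposition of a labeling into (label of last vertex, standardized rest) -/

def wOf (k : Fin (m+1)) (σ : Equiv.Perm (Fin m)) : Equiv.Perm (Fin (m+1)) :=
  ((finSuccEquiv' (Fin.last m)).trans σ.optionCongr).trans (finSuccEquiv' k).symm

lemma wOf_last (k : Fin (m+1)) (σ : Equiv.Perm (Fin m)) : wOf k σ (Fin.last m) = k := by
  unfold wOf
  simp only [Equiv.trans_apply, finSuccEquiv'_at, Equiv.optionCongr_apply,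
    Option.map_none, finSuccEquiv'_symm_none]

lemma wOf_castSucc (k : Fin (m+1)) (σ : Equiv.Perm (Fin m)) (u : Fin m) :
    wOf k σ u.castSucc = k.succAbove (σ u) := by
  have h : u.castSucc = (Fin.last m).succAbove u := by rw [Fin.succAbove_last]
  rw [h]
  unfold wOf
  simp only [Equiv.trans_apply, finSuccEquiv'_succAbove, Equiv.optionCongr_apply,
    Option.map_some, finSuccEquiv'_symm_some]

lemma lt_succAbove_iff' (k : Fin (m+1)) (j : Fin m) :
    k < k.succAbove j ↔ (k : ℕ) ≤ (j : ℕ) := by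
  rcases lt_or_ge j.castSucc k with h | h
  · rw [Fin.succAbove_of_castSucc_lt _ _ h]
    have h' : (j : ℕ) < (k : ℕ) := by simpa [Fin.lt_def] using h
    simp only [Fin.lt_def, Fin.coe_castSucc]
    omega
  · rw [Fin.succAbove_of_le_castSucc _ _ h]
    have h' : (k : ℕ) ≤ (j : ℕ) := by simpa [Fin.le_def] using h
    simp only [Fin.lt_def, Fin.val_succ]
    omega

lemma wOf_bijective :
    Function.Bijective (fun p : Fin (m+1) × Equiv.Perm (Fin m) => wOf p.1 p.2) := by
  rw [Fintype.bijective_iff_injective_and_card]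
  constructor
  · rintro ⟨k, σ⟩ ⟨k', σ'⟩ h
    simp only at h
    have hk : k = k' := by
      have := DFunLike.congr_fun h (Fin.last m)
      simpa [wOf_last] using this
    subst hk
    have hσ : σ = σ' := Equiv.ext fun u => Fin.succAbove_right_injective (by
      have := DFunLike.congr_fun h u.castSucc
      simpa only [wOf_castSucc] using this)
    simp [hσ]
  · simp [Fintype.card_perm, Nat.factorial_succ]

/-- the number of inversions between the last vertex (labeled `k`) and its strict ideal. -/
def cStat (r : Fin (m+1) → Fin (m+1) → Prop) (σ : Equiv.Perm (Fin m)) (k : Fin (m+1)) : ℕ :=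
  ((Dset r).filter fun u => (k : ℕ) ≤ (σ u : ℕ)).card

lemma invF_wOf {r : Fin (m+1) → Fin (m+1) → Prop} (hF : IsForest r) (k : Fin (m+1))
    (σ : Equiv.Perm (Fin m)) :
    invF r (wOf k σ) = invF (rRes r) σ + cStat r σ k := by
  unfold invF
  set w := wOf k σ with hw
  set S : Finset (Fin (m+1) × Fin (m+1)) :=
    univ.filter fun uv => strictR r uv.1 uv.2 ∧ w uv.2 < w uv.1 with hS
  have hsplit := Finset.card_filter_add_card_filter_not
    (s := S) (p := fun uv : Fin (m+1) × Fin (m+1) => uv.2 = Fin.last m)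
  have h1 : (S.filter fun uv => uv.2 = Fin.last m).card = cStat r σ k := by
    unfold cStat
    refine (Finset.card_nbij (fun u => (u.castSucc, Fin.last m)) ?_ ?_ ?_).symm
    · intro a ha
      simp only [Finset.mem_coe, mem_filter, mem_Dset] at ha
      simp only [Finset.mem_coe, hS, mem_filter, mem_univ, true_and, and_true]
      refine ⟨ha.1, ?_⟩
      rw [hw, wOf_last, wOf_castSucc]
      exact (lt_succAbove_iff' k (σ a)).mpr ha.2
    · intro a _ b _ hab
      exact Fin.castSucc_injective m (congrArg Prod.fst hab)
    · rintro ⟨a, b⟩ hab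
      rw [Finset.mem_coe] at hab
      simp only [hS, mem_filter, mem_univ, true_and] at hab
      obtain ⟨⟨⟨hr1, hne1⟩, hlt1⟩, rfl⟩ := hab
      obtain ⟨j, rfl⟩ := Fin.exists_castSucc_eq.mpr hne1
      refine ⟨j, ?_, rfl⟩
      rw [Finset.mem_coe]
      simp only [mem_filter, mem_Dset]
      rw [hw, wOf_last, wOf_castSucc] at hlt1
      exact ⟨⟨hr1, hne1⟩, (lt_succAbove_iff' k (σ j)).mp hlt1⟩
  have h2 : (S.filter fun uv => ¬ uv.2 = Fin.last m).card
      = (univ.filter fun uv : Fin m × Fin m =>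
          strictR (rRes r) uv.1 uv.2 ∧ σ uv.2 < σ uv.1).card := by
    refine (Finset.card_nbij (fun uv : Fin m × Fin m => (uv.1.castSucc, uv.2.castSucc)) ?_ ?_ ?_).symm
    · rintro ⟨a, b⟩ hab
      simp only [Finset.mem_coe, mem_filter, mem_univ, true_and] at hab
      obtain ⟨hs, hlt⟩ := hab
      simp only [Finset.mem_coe, hS, mem_filter, mem_univ, true_and]
      refine ⟨⟨strictR_rRes.mp hs, ?_⟩, (Fin.castSucc_lt_last b).ne⟩
      rw [hw, wOf_castSucc, wOf_castSucc]
      exact Fin.succAbove_lt_succAbove_iff.mpr hlt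
    · rintro ⟨a, b⟩ _ ⟨c, d⟩ _ hab
      have h1' := congrArg Prod.fst hab
      have h2' := congrArg Prod.snd hab
      simp only at h1' h2'
      exact Prod.ext (Fin.castSucc_injective m h1') (Fin.castSucc_injective m h2')
    · rintro ⟨a, b⟩ hab
      rw [Finset.mem_coe] at hab
      simp only [hS, mem_filter, mem_univ, true_and] at hab
      obtain ⟨⟨⟨hr1, hne1⟩, hlt1⟩, hbl⟩ := hab
      have hal : a ≠ Fin.last m := by
        intro hc; subst hc
        exact hbl (last_max hF hr1)
      obtain ⟨a', rfl⟩ := Fin.exists_castSucc_eq.mpr hal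
      obtain ⟨b', rfl⟩ := Fin.exists_castSucc_eq.mpr hbl
      refine ⟨(a', b'), ?_, rfl⟩
      rw [Finset.mem_coe]
      simp only [mem_filter, mem_univ, true_and]
      rw [hw, wOf_castSucc, wOf_castSucc] at hlt1
      exact ⟨strictR_rRes.mpr ⟨hr1, hne1⟩, Fin.succAbove_lt_succAbove_iff.mp hlt1⟩
  omega

/-! ### relabeling equivalence moving one label set onto another, monotonically on each side -/

def moveEquiv (A B : Finset (Fin m)) (h : B.card = A.card) (hc : Bᶜ.card = Aᶜ.card) :
    Fin m ≃ Fin m :=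
  (Equiv.sumCompl (· ∈ A)).symm.trans
    ((Equiv.sumCongr
        ((A.orderIsoOfFin rfl).toEquiv.symm.trans (B.orderIsoOfFin h).toEquiv)
        (((Equiv.subtypeEquivRight (fun x => (Finset.mem_compl (s := A)).symm)).trans
            ((Aᶜ.orderIsoOfFin rfl).toEquiv.symm.trans (Bᶜ.orderIsoOfFin hc).toEquiv)).trans
          (Equiv.subtypeEquivRight (fun x => (Finset.mem_compl (s := B)))))).trans
      (Equiv.sumCompl (· ∈ B)))

lemma moveEquiv_apply_pos {A B : Finset (Fin m)} {h hc} {x : Fin m} (hx : x ∈ A) :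
    moveEquiv A B h hc x = ((B.orderIsoOfFin h) ((A.orderIsoOfFin rfl).symm ⟨x, hx⟩) : Fin m) := by
  simp [moveEquiv, Equiv.sumCompl_symm_apply_of_pos hx]

lemma moveEquiv_apply_neg {A B : Finset (Fin m)} {h hc} {x : Fin m} (hx : x ∉ A) :
    moveEquiv A B h hc x
      = ((Bᶜ.orderIsoOfFin hc) ((Aᶜ.orderIsoOfFin rfl).symm ⟨x, Finset.mem_compl.mpr hx⟩) : Fin m) := by
  simp [moveEquiv, Equiv.sumCompl_symm_apply_of_neg hx, Equiv.subtypeEquivRight]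
  rfl

lemma moveEquiv_mem_pos {A B : Finset (Fin m)} {h hc} {x : Fin m} (hx : x ∈ A) :
    moveEquiv A B h hc x ∈ B := by
  rw [moveEquiv_apply_pos hx]; exact Finset.coe_mem _

lemma moveEquiv_mem_neg {A B : Finset (Fin m)} {h hc} {x : Fin m} (hx : x ∉ A) :
    moveEquiv A B h hc x ∉ B := by
  rw [moveEquiv_apply_neg hx]
  have := Finset.coe_mem ((Bᶜ.orderIsoOfFin hc) ((Aᶜ.orderIsoOfFin rfl).symm ⟨x, Finset.mem_compl.mpr hx⟩))
  exact Finset.mem_compl.mp this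

lemma moveEquiv_lt_pos {A B : Finset (Fin m)} {h hc} {x y : Fin m} (hx : x ∈ A) (hy : y ∈ A) :
    moveEquiv A B h hc x < moveEquiv A B h hc y ↔ x < y := by
  rw [moveEquiv_apply_pos hx, moveEquiv_apply_pos hy, Subtype.coe_lt_coe,
    OrderIso.lt_iff_lt, OrderIso.lt_iff_lt, Subtype.mk_lt_mk]

lemma moveEquiv_lt_neg {A B : Finset (Fin m)} {h hc} {x y : Fin m} (hx : x ∉ A) (hy : y ∉ A) :
    moveEquiv A B h hc x < moveEquiv A B h hc y ↔ x < y := by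
  rw [moveEquiv_apply_neg hx, moveEquiv_apply_neg hy, Subtype.coe_lt_coe,
    OrderIso.lt_iff_lt, OrderIso.lt_iff_lt, Subtype.mk_lt_mk]

lemma moveEquiv_image {A B : Finset (Fin m)} {h hc} :
    A.image (moveEquiv A B h hc) = B := by
  apply Finset.eq_of_subset_of_card_le
  · exact Finset.image_subset_iff.mpr fun x hx => moveEquiv_mem_pos hx
  · rw [Finset.card_image_of_injective _ (Equiv.injective _), h]

lemma invF_trans_moveEquiv {r : Fin (m+1) → Fin (m+1) → Prop} (hF : IsForest r)
    {A B : Finset (Fin m)} {h hc} {σ : Equiv.Perm (Fin m)} (hσ : (Dset r).image σ = A) :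
    invF (rRes r) (σ.trans (moveEquiv A B h hc)) = invF (rRes r) σ := by
  have key : ∀ x : Fin m, x ∈ Dset r ↔ σ x ∈ A := by
    intro x
    constructor
    · intro hx; exact hσ ▸ Finset.mem_image_of_mem σ hx
    · intro hx
      rw [← hσ] at hx
      obtain ⟨y, hy, hyx⟩ := Finset.mem_image.mp hx
      rwa [← σ.injective hyx]
  unfold invF
  congr 1
  apply Finset.filter_congr
  rintro ⟨u, v⟩ -
  simp only [Equiv.trans_apply]
  constructor
  · rintro ⟨hs, hlt⟩
    refine ⟨hs, ?_⟩
    by_cases hu : u ∈ Dset r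
    · have hv : v ∈ Dset r := (mem_Dset_iff hF hs).mp hu
      exact (moveEquiv_lt_pos ((key v).mp hv) ((key u).mp hu)).mp hlt
    · have hv : v ∉ Dset r := fun hv => hu ((mem_Dset_iff hF hs).mpr hv)
      exact (moveEquiv_lt_neg (fun hc' => hv ((key v).mpr hc'))
        (fun hc' => hu ((key u).mpr hc'))).mp hlt
  · rintro ⟨hs, hlt⟩
    refine ⟨hs, ?_⟩
    by_cases hu : u ∈ Dset r
    · have hv : v ∈ Dset r := (mem_Dset_iff hF hs).mp hu
      exact (moveEquiv_lt_pos ((key v).mp hv) ((key u).mp hu)).mpr hlt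
    · have hv : v ∉ Dset r := fun hv => hu ((mem_Dset_iff hF hs).mpr hv)
      exact (moveEquiv_lt_neg (fun hc' => hv ((key v).mpr hc'))
        (fun hc' => hu ((key u).mpr hc'))).mpr hlt
/-! ### the combinatorial identity -/

lemma filter_insert_succAbove (A : Finset (Fin m)) (k : Fin (m+1)) :
    (insert k (A.image k.succAbove)).filter (fun b => k < b)
      = (A.filter fun j : Fin m => (k : ℕ) ≤ (j : ℕ)).image k.succAbove := by
  rw [Finset.filter_insert, if_neg (lt_irrefl k), Finset.filter_image]
  congr 1
  exact Finset.filter_congr fun j _ => lt_succAbove_iff' k j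

lemma card_insert_succAbove (A : Finset (Fin m)) (k : Fin (m+1)) :
    (insert k (A.image k.succAbove)).card = A.card + 1 := by
  rw [Finset.card_insert_of_notMem, Finset.card_image_of_injective _ Fin.succAbove_right_injective]
  intro hc
  obtain ⟨j, _, hj⟩ := Finset.mem_image.mp hc
  exact Fin.succAbove_ne k j hj

lemma count_gt_injOn {B : Finset (Fin (m+1))} {a b : Fin (m+1)} (hb : b ∈ B)
    (hcard : (B.filter fun x => a < x).card = (B.filter fun x => b < x).card) :
    ¬ a < b := by
  intro hab
  have hsub : B.filter (fun x => b < x) ⊂ B.filter (fun x => a < x) := by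
    refine ⟨fun x hx => ?_, fun hsub' => ?_⟩
    · rw [Finset.mem_filter] at hx ⊢
      exact ⟨hx.1, lt_trans hab hx.2⟩
    have hbmem : b ∈ B.filter (fun x => a < x) := Finset.mem_filter.mpr ⟨hb, hab⟩
    exact absurd (Finset.mem_filter.mp (hsub' hbmem)).2 (lt_irrefl b)
  exact absurd hcard (Finset.card_lt_card hsub).ne'

lemma gIdentity {R : Type*} [CommRing R] (q : R) (m d : ℕ) :
    ∑ A ∈ Finset.powersetCard d (univ : Finset (Fin m)),
        ∑ k : Fin (m+1), q ^ ((A.filter fun j : Fin m => (k : ℕ) ≤ (j : ℕ)).card)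
      = ((m+1).choose (d+1) : R) * qInt q (d+1) := by
  have hRHS : ((m+1).choose (d+1) : R) * qInt q (d+1)
      = ∑ B ∈ Finset.powersetCard (d+1) (univ : Finset (Fin (m+1))),
          ∑ i ∈ Finset.range (d+1), q ^ i := by
    rw [Finset.sum_const, Finset.card_powersetCard, Finset.card_univ, Fintype.card_fin,
      nsmul_eq_mul]
    rfl
  have hL : (∑ A ∈ Finset.powersetCard d (univ : Finset (Fin m)),
        ∑ k : Fin (m+1), q ^ ((A.filter fun j : Fin m => (k : ℕ) ≤ (j : ℕ)).card))
      = ∑ p ∈ (Finset.powersetCard d (univ : Finset (Fin m)) ×ˢ (univ : Finset (Fin (m+1)))),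
          q ^ ((p.1.filter fun j : Fin m => (p.2 : ℕ) ≤ (j : ℕ)).card) := by
    rw [Finset.sum_product]
  have hR : (∑ B ∈ Finset.powersetCard (d+1) (univ : Finset (Fin (m+1))),
        ∑ i ∈ Finset.range (d+1), q ^ i)
      = ∑ p ∈ (Finset.powersetCard (d+1) (univ : Finset (Fin (m+1))) ×ˢ Finset.range (d+1)),
          q ^ p.2 := by
    rw [Finset.sum_product]
  rw [hRHS, hL, hR]
  have hmapsto : ∀ p : Finset (Fin m) × Fin (m+1),
      p ∈ (Finset.powersetCard d (univ : Finset (Fin m)) ×ˢ (univ : Finset (Fin (m+1)))) →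
      (insert p.2 (p.1.image p.2.succAbove), (p.1.filter fun j : Fin m => (p.2 : ℕ) ≤ (j : ℕ)).card)
        ∈ (Finset.powersetCard (d+1) (univ : Finset (Fin (m+1))) ×ˢ Finset.range (d+1)) := by
    rintro ⟨A, k⟩ hp
    simp only [Finset.mem_product, Finset.mem_powersetCard_univ, Finset.mem_univ, and_true] at hp
    simp only [Finset.mem_product, Finset.mem_powersetCard_univ, Finset.mem_range]
    refine ⟨by rw [card_insert_succAbove, hp], ?_⟩
    exact Nat.lt_succ_of_le (le_trans (Finset.card_filter_le _ _) (le_of_eq hp))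
  have hinj : ∀ p₁ ∈ (Finset.powersetCard d (univ : Finset (Fin m)) ×ˢ (univ : Finset (Fin (m+1)))),
      ∀ p₂ ∈ (Finset.powersetCard d (univ : Finset (Fin m)) ×ˢ (univ : Finset (Fin (m+1)))),
      (insert p₁.2 (p₁.1.image p₁.2.succAbove), (p₁.1.filter fun j : Fin m => (p₁.2 : ℕ) ≤ (j : ℕ)).card)
        = (insert p₂.2 (p₂.1.image p₂.2.succAbove), (p₂.1.filter fun j : Fin m => (p₂.2 : ℕ) ≤ (j : ℕ)).card)
      → p₁ = p₂ := by
    rintro ⟨A, k⟩ h1 ⟨A', k'⟩ h2 heq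
    simp only [Prod.mk.injEq] at heq
    obtain ⟨hB, hstat⟩ := heq
    have hk1 : ((insert k (A.image k.succAbove)).filter (fun x => k < x)).card
        = (A.filter fun j : Fin m => (k : ℕ) ≤ (j : ℕ)).card := by
      rw [filter_insert_succAbove, Finset.card_image_of_injective _ Fin.succAbove_right_injective]
    have hk2 : ((insert k' (A'.image k'.succAbove)).filter (fun x => k' < x)).card
        = (A'.filter fun j : Fin m => (k' : ℕ) ≤ (j : ℕ)).card := by
      rw [filter_insert_succAbove, Finset.card_image_of_injective _ Fin.succAbove_right_injective]
    rw [hB] at hk1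
    have hcc : ((insert k' (A'.image k'.succAbove)).filter (fun x => k < x)).card
        = ((insert k' (A'.image k'.succAbove)).filter (fun x => k' < x)).card := by
      rw [hk1, hstat, ← hk2]
    have hkk : k = k' := by
      have hmem : k ∈ insert k' (A'.image k'.succAbove) := by
        rw [← hB]; exact Finset.mem_insert_self _ _
      have hmem' : k' ∈ insert k' (A'.image k'.succAbove) := Finset.mem_insert_self _ _
      rcases lt_trichotomy k k' with h | h | h
      · exact absurd h (count_gt_injOn hmem' hcc)
      · exact h
      · exact absurd h (count_gt_injOn hmem hcc.symm)
    subst hkk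
    have hA : A.image k.succAbove = A'.image k.succAbove := by
      have h1' : (insert k (A.image k.succAbove)).erase k = A.image k.succAbove := by
        apply Finset.erase_insert
        intro hc
        obtain ⟨j, _, hj⟩ := Finset.mem_image.mp hc
        exact Fin.succAbove_ne k j hj
      have h2' : (insert k (A'.image k.succAbove)).erase k = A'.image k.succAbove := by
        apply Finset.erase_insert
        intro hc
        obtain ⟨j, _, hj⟩ := Finset.mem_image.mp hc
        exact Fin.succAbove_ne k j hj
      rw [← h1', ← h2', hB]
    have hAA : A = A' := by
      ext x
      constructor
      · intro hx
        have hm : k.succAbove x ∈ A'.image k.succAbove := hA ▸ Finset.mem_image_of_mem _ hx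
        obtain ⟨y, hy, hxy⟩ := Finset.mem_image.mp hm
        rwa [← Fin.succAbove_right_injective hxy]
      · intro hx
        have hm : k.succAbove x ∈ A.image k.succAbove := hA.symm ▸ Finset.mem_image_of_mem _ hx
        obtain ⟨y, hy, hxy⟩ := Finset.mem_image.mp hm
        rwa [← Fin.succAbove_right_injective hxy]
    simp [hAA]
  refine Finset.sum_bij (fun p hp => (insert p.2 (p.1.image p.2.succAbove),
      (p.1.filter fun j : Fin m => (p.2 : ℕ) ≤ (j : ℕ)).card)) hmapsto
      (fun p₁ h₁ p₂ h₂ h => hinj p₁ h₁ p₂ h₂ h) ?_ (fun p hp => rfl)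
  intro b hb
  have hcard : (Finset.powersetCard (d+1) (univ : Finset (Fin (m+1))) ×ˢ Finset.range (d+1)).card
      ≤ ((Finset.powersetCard d (univ : Finset (Fin m))) ×ˢ (univ : Finset (Fin (m+1)))).card := by
    rw [Finset.card_product, Finset.card_product, Finset.card_powersetCard,
      Finset.card_powersetCard, Finset.card_univ, Finset.card_univ, Fintype.card_fin,
      Fintype.card_fin, Finset.card_range]
    refine le_of_eq ?_
    calc (m+1).choose (d+1) * (d+1) = (m+1) * m.choose d := (Nat.add_one_mul_choose_eq m d).symm
      _ = m.choose d * (m+1) := mul_comm _ _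
  obtain ⟨a, ha, hba⟩ := Finset.surj_on_of_inj_on_of_card_le
    (fun p _ => (insert p.2 (p.1.image p.2.succAbove),
      (p.1.filter fun j : Fin m => (p.2 : ℕ) ≤ (j : ℕ)).card))
    hmapsto (fun p₁ p₂ h₁ h₂ h => hinj p₁ h₁ p₂ h₂ h) hcard b hb
  exact ⟨a, ha, hba.symm⟩
/-! ### assembling the recursion -/

def gFun {R : Type*} [CommRing R] (q : R) (A : Finset (Fin m)) : R :=
  ∑ k : Fin (m+1), q ^ ((A.filter fun j : Fin m => (k : ℕ) ≤ (j : ℕ)).card)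

lemma cStat_image (r : Fin (m+1) → Fin (m+1) → Prop) (σ : Equiv.Perm (Fin m)) (k : Fin (m+1)) :
    cStat r σ k = (((Dset r).image σ).filter fun j : Fin m => (k : ℕ) ≤ (j : ℕ)).card := by
  rw [Finset.filter_image, Finset.card_image_of_injective _ σ.injective]
  rfl

lemma step1 {R : Type*} [CommRing R] (q : R) {r : Fin (m+1) → Fin (m+1) → Prop}
    (hF : IsForest r) :
    ∑ w : Equiv.Perm (Fin (m+1)), q ^ invF r w
      = ∑ σ : Equiv.Perm (Fin m), q ^ invF (rRes r) σ * gFun q ((Dset r).image σ) := by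
  rw [← Fintype.sum_bijective _ wOf_bijective
      (fun p : Fin (m+1) × Equiv.Perm (Fin m) => q ^ (invF (rRes r) p.2 + cStat r p.2 p.1))
      (fun w => q ^ invF r w)
      (fun p => by
        show q ^ (invF (rRes r) p.2 + cStat r p.2 p.1) = q ^ invF r (wOf p.1 p.2)
        rw [invF_wOf hF])]
  rw [Fintype.sum_prod_type, Finset.sum_comm]
  refine Finset.sum_congr rfl fun σ _ => ?_
  simp only [gFun, Finset.mul_sum]
  refine Finset.sum_congr rfl fun k _ => ?_
  rw [pow_add, cStat_image]

def fiberSum {R : Type*} [CommRing R] (q : R) (r : Fin (m+1) → Fin (m+1) → Prop)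
    (A : Finset (Fin m)) : R :=
  ∑ σ ∈ univ.filter (fun σ : Equiv.Perm (Fin m) => (Dset r).image σ = A),
    q ^ invF (rRes r) σ

lemma fiberSum_eq {R : Type*} [CommRing R] (q : R) {r : Fin (m+1) → Fin (m+1) → Prop}
    (hF : IsForest r) {A B : Finset (Fin m)}
    (hA : A.card = (Dset r).card) (hB : B.card = (Dset r).card) :
    fiberSum q r A = fiberSum q r B := by
  have h : B.card = A.card := by rw [hA, hB]
  have hc : Bᶜ.card = Aᶜ.card := by rw [Finset.card_compl, Finset.card_compl, h]
  set π := moveEquiv A B h hc with hπ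
  have himg : B.image ⇑π.symm = A := by
    rw [← moveEquiv_image (A := A) (B := B) (h := h) (hc := hc), Finset.image_image]
    rw [show ⇑(moveEquiv A B h hc).symm ∘ ⇑(moveEquiv A B h hc) = id from
      Equiv.symm_comp_self _]
    exact Finset.image_id
  unfold fiberSum
  refine Finset.sum_nbij' (fun σ => σ.trans π) (fun σ => σ.trans π.symm) ?_ ?_ ?_ ?_ ?_
  · intro σ hσ
    simp only [Finset.mem_filter, Finset.mem_univ, true_and] at hσ ⊢
    rw [Equiv.coe_trans, ← Finset.image_image, hσ, hπ]
    exact moveEquiv_image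
  · intro σ hσ
    simp only [Finset.mem_filter, Finset.mem_univ, true_and] at hσ ⊢
    rw [Equiv.coe_trans, ← Finset.image_image, hσ]
    exact himg
  · intro σ _
    ext x
    simp
  · intro σ _
    ext x
    simp
  · intro σ hσ
    simp only [Finset.mem_filter, Finset.mem_univ, true_and] at hσ
    exact (congrArg (q ^ ·) (invF_trans_moveEquiv hF hσ)).symm

lemma keyStep {R : Type*} [CommRing R] (q : R) (r : Fin (m+1) → Fin (m+1) → Prop)
    (hF : IsForest r) :
    (m.choose (Dset r).card : R) * ∑ w : Equiv.Perm (Fin (m+1)), q ^ invF r w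
      = ((m+1).choose ((Dset r).card + 1) : R) * qInt q ((Dset r).card + 1)
        * ∑ σ : Equiv.Perm (Fin m), q ^ invF (rRes r) σ := by
  set d := (Dset r).card with hd
  rw [step1 q hF]
  have hmaps : ∀ σ : Equiv.Perm (Fin m), σ ∈ (univ : Finset (Equiv.Perm (Fin m))) →
      (Dset r).image σ ∈ Finset.powersetCard d univ :=
    fun σ _ => Finset.mem_powersetCard_univ.mpr (Finset.card_image_of_injective _ σ.injective)
  rw [← Finset.sum_fiberwise_of_maps_to hmaps
    (fun σ => q ^ invF (rRes r) σ * gFun q ((Dset r).image σ))]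
  have hfib : ∀ A ∈ Finset.powersetCard d (univ : Finset (Fin m)),
      (∑ σ ∈ univ.filter (fun σ : Equiv.Perm (Fin m) => (Dset r).image σ = A),
          q ^ invF (rRes r) σ * gFun q ((Dset r).image σ))
        = gFun q A * fiberSum q r A := by
    intro A hA
    rw [fiberSum, Finset.mul_sum]
    refine Finset.sum_congr rfl fun σ hσ => ?_
    rw [(Finset.mem_filter.mp hσ).2]
    ring
  rw [Finset.sum_congr rfl hfib]
  have hcount : ∀ A ∈ Finset.powersetCard d (univ : Finset (Fin m)),
      (m.choose d : R) * fiberSum q r A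
        = ∑ B ∈ Finset.powersetCard d (univ : Finset (Fin m)), fiberSum q r B := by
    intro A hA
    have hconst : ∀ B ∈ Finset.powersetCard d (univ : Finset (Fin m)),
        fiberSum q r B = fiberSum q r A :=
      fun B hB => fiberSum_eq q hF (Finset.mem_powersetCard_univ.mp hB)
        (Finset.mem_powersetCard_univ.mp hA)
    rw [Finset.sum_congr rfl hconst, Finset.sum_const, Finset.card_powersetCard,
      Finset.card_univ, Fintype.card_fin, nsmul_eq_mul]
  have hback : (∑ B ∈ Finset.powersetCard d (univ : Finset (Fin m)), fiberSum q r B)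
      = ∑ σ : Equiv.Perm (Fin m), q ^ invF (rRes r) σ := by
    simp only [fiberSum]
    exact Finset.sum_fiberwise_of_maps_to hmaps _
  calc (m.choose d : R)
      * ∑ A ∈ Finset.powersetCard d (univ : Finset (Fin m)), gFun q A * fiberSum q r A
      = ∑ A ∈ Finset.powersetCard d (univ : Finset (Fin m)),
          gFun q A * ((m.choose d : R) * fiberSum q r A) := by
        rw [Finset.mul_sum]
        exact Finset.sum_congr rfl fun A _ => by ring
    _ = ∑ A ∈ Finset.powersetCard d (univ : Finset (Fin m)),
          gFun q A * ∑ B ∈ Finset.powersetCard d (univ : Finset (Fin m)), fiberSum q r B :=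
        Finset.sum_congr rfl fun A hA => by rw [hcount A hA]
    _ = (∑ A ∈ Finset.powersetCard d (univ : Finset (Fin m)), gFun q A)
          * ∑ B ∈ Finset.powersetCard d (univ : Finset (Fin m)), fiberSum q r B := by
        rw [← Finset.sum_mul]
    _ = ((m+1).choose (d+1) : R) * qInt q (d+1)
          * ∑ σ : Equiv.Perm (Fin m), q ^ invF (rRes r) σ := by
        rw [hback]
        congr 1
        simp only [gFun]
        exact gIdentity q m d

lemma mainPoly (n : ℕ) : ∀ (r : Fin n → Fin n → Prop), IsForest r →
    ((∏ v : Fin n, hook r v : ℕ) : Polynomial ℤ)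
        * ∑ w : Equiv.Perm (Fin n), (Polynomial.X : Polynomial ℤ) ^ invF r w
      = (n.factorial : Polynomial ℤ)
        * ∏ v : Fin n, qInt (Polynomial.X : Polynomial ℤ) (hook r v) := by
  induction n with
  | zero =>
    intro r hF
    have hinv : ∀ w : Equiv.Perm (Fin 0), invF r w = 0 := by
      intro w
      simp [invF]
    simp [hinv, Nat.factorial]
  | succ m ih =>
    intro r hF
    have hF' := isForest_rRes r hF
    have IH := ih (rRes r) hF'
    have hkey := keyStep (R := Polynomial ℤ) Polynomial.X r hF
    set d := (Dset r).card with hdd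
    have hdm : d ≤ m := by
      have h1 : (Dset r).card ≤ (univ : Finset (Fin m)).card := Finset.card_le_card (by simp)
      simpa using h1
    have hprod : (∏ v : Fin (m+1), hook r v) = (∏ v : Fin m, hook (rRes r) v) * (d+1) := by
      rw [Fin.prod_univ_castSucc, hook_last r hF]
      congr 1
      exact Finset.prod_congr rfl fun v _ => hook_castSucc r hF v
    have hqprod : (∏ v : Fin (m+1), qInt (Polynomial.X : Polynomial ℤ) (hook r v))
        = (∏ v : Fin m, qInt (Polynomial.X : Polynomial ℤ) (hook (rRes r) v))
          * qInt Polynomial.X (d+1) := by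
      rw [Fin.prod_univ_castSucc, hook_last r hF]
      congr 1
      exact Finset.prod_congr rfl fun v _ => by rw [hook_castSucc r hF v]
    have hch : ((d+1) * (m+1).choose (d+1) : ℕ) = ((m+1) * m.choose d : ℕ) := by
      rw [mul_comm ((d:ℕ)+1) ((m+1).choose (d+1))]
      exact (Nat.add_one_mul_choose_eq m d).symm
    have hne : ((m.choose d : ℕ) : Polynomial ℤ) ≠ 0 :=
      Nat.cast_ne_zero.mpr (Nat.choose_pos hdm).ne'
    apply mul_left_cancel₀ hne
    rw [hprod, hqprod, Nat.factorial_succ]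
    have hch' : (((d:ℕ)+1 : ℕ) : Polynomial ℤ) * ((m+1).choose (d+1) : Polynomial ℤ)
        = (((m:ℕ)+1 : ℕ) : Polynomial ℤ) * (m.choose d : Polynomial ℤ) := by
      exact_mod_cast congrArg (Nat.cast : ℕ → Polynomial ℤ) hch
    push_cast
    push_cast at hkey IH hch'
    linear_combination
      (((d : Polynomial ℤ)+1) * (∏ v : Fin m, (hook (rRes r) v : Polynomial ℤ))) * hkey
      + (((d : Polynomial ℤ)+1) * ((m+1).choose (d+1) : Polynomial ℤ)
          * qInt Polynomial.X (d+1)) * IH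
      + ((Nat.factorial m : Polynomial ℤ) * qInt Polynomial.X (d+1)
          * (∏ v : Fin m, qInt (Polynomial.X : Polynomial ℤ) (hook (rRes r) v))) * hch'

end Aux

/-- The inversion enumerator over all labelings of a forest. -/
theorem stmt1 (n : ℕ) (r : Fin n → Fin n → Prop) (hF : IsForest r)
    (R : Type*) [CommRing R] (q : R) :
    ∑ w : Equiv.Perm (Fin n), q ^ invF r w
      = ((n.factorial / ∏ v : Fin n, hook r v : ℕ) : R) * ∏ v : Fin n, qInt q (hook r v) := by
  have hmain := mainPoly n r hF
  have hhpos : ∀ v : Fin n, 0 < hook r v := fun v =>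
    Finset.card_pos.mpr ⟨v, Finset.mem_filter.mpr ⟨Finset.mem_univ v, hF.1.refl v⟩⟩
  have hppos : 0 < ∏ v : Fin n, hook r v := Finset.prod_pos fun v _ => hhpos v
  set E : ℕ := (univ.filter fun w : Equiv.Perm (Fin n) => 0 = invF r w).card with hE
  have hconst : Polynomial.constantCoeff
      (∑ w : Equiv.Perm (Fin n), (Polynomial.X : Polynomial ℤ) ^ invF r w) = (E : ℤ) := by
    rw [map_sum]
    simp only [Polynomial.constantCoeff_apply, Polynomial.coeff_X_pow]
    rw [Finset.sum_boole, hE]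
  have hq1 : ∀ v : Fin n,
      Polynomial.constantCoeff (qInt (Polynomial.X : Polynomial ℤ) (hook r v)) = 1 := by
    intro v
    simp only [qInt]
    rw [map_sum]
    simp only [Polynomial.constantCoeff_apply, Polynomial.coeff_X_pow]
    rw [Finset.sum_ite_eq]
    simp [Finset.mem_range, hhpos v]
  have hEfac : (∏ v : Fin n, hook r v) * E = n.factorial := by
    have h0 := congrArg Polynomial.constantCoeff hmain
    rw [map_mul, map_mul, map_natCast, map_natCast, hconst, map_prod] at h0
    simp only [hq1, Finset.prod_const_one, mul_one] at h0
    exact_mod_cast h0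
  have hdiv : n.factorial / (∏ v : Fin n, hook r v) = E := by
    rw [← hEfac, Nat.mul_div_cancel_left _ hppos]
  have hPP : (∑ w : Equiv.Perm (Fin n), (Polynomial.X : Polynomial ℤ) ^ invF r w)
      = (E : Polynomial ℤ) * ∏ v : Fin n, qInt Polynomial.X (hook r v) := by
    have hne : ((∏ v : Fin n, hook r v : ℕ) : Polynomial ℤ) ≠ 0 :=
      Nat.cast_ne_zero.mpr hppos.ne'
    apply mul_left_cancel₀ hne
    rw [hmain, ← hEfac]
    push_cast
    ring
  calc ∑ w : Equiv.Perm (Fin n), q ^ invF r w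
      = Polynomial.aeval q
          (∑ w : Equiv.Perm (Fin n), (Polynomial.X : Polynomial ℤ) ^ invF r w) := by
        rw [map_sum]
        exact Finset.sum_congr rfl fun w _ => by simp
    _ = Polynomial.aeval q ((E : Polynomial ℤ) * ∏ v : Fin n, qInt Polynomial.X (hook r v)) := by
        rw [hPP]
    _ = (E : R) * ∏ v : Fin n, qInt q (hook r v) := by
        rw [map_mul, map_natCast, map_prod]
        congr 1
        refine Finset.prod_congr rfl fun v _ => ?_
        simp [qInt, map_sum]
    _ = ((n.factorial / ∏ v : Fin n, hook r v : ℕ) : R) * ∏ v : Fin n, qInt q (hook r v) := by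
        rw [hdiv]
end

section
/- Let w be a signed labeling of a forest F with A-code (a_1,...,a_n). Then w(v_i) < 0 if and only if h_{v_i} ≤ a_i ≤ 2h_{v_i} − 1; moreover, if w(v_i) > 0 then a_i < h_{v_i}. -/
open Finset

open scoped Classical

/-- `w(v_i) < 0` iff `h_{v_i} ≤ a_i ≤ 2h_{v_i} - 1`; and `w(v_i) > 0` implies `a_i < h_{v_i}`. -/
theorem stmt4 (n : ℕ) (r : Fin n → Fin n → Prop) (hF : IsForest r)
    (p : Equiv.Perm (Fin n) × (Fin n → Bool)) (i : Fin n) :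
    (wVal p i < 0 ↔ hook r i ≤ acodeF r (wVal p) i ∧ acodeF r (wVal p) i ≤ 2 * hook r i - 1) ∧
      (0 < wVal p i → acodeF r (wVal p) i < hook r i) := by
  obtain ⟨hPO, -, -⟩ := hF
  have hrefl : r i i := hPO.1.refl i
  set w := wVal p with hw
  have habs : ∀ u, |w u| = (p.1 u : ℤ) + 1 := by
    intro u
    simp only [hw, wVal]
    split
    · rw [show (-1 : ℤ) * ((p.1 u : ℤ) + 1) = -((p.1 u : ℤ)+1) by ring, abs_neg,
        abs_of_pos (by positivity)]
    · rw [one_mul, abs_of_pos (by positivity)]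
  have hne0 : ∀ u, w u ≠ 0 := by
    intro u h
    have := habs u
    rw [h] at this
    simp at this
    omega
  have hkey : ∀ u, u ≠ i → w u ≠ w i ∧ w u + w i ≠ 0 := by
    intro u hu
    have hne : (p.1 u : ℤ) + 1 ≠ (p.1 i : ℤ) + 1 := by
      have h2 := p.1.injective.ne hu
      have : (p.1 u : ℕ) ≠ (p.1 i : ℕ) := fun h => h2 (Fin.ext h)
      omega
    constructor
    · intro h; exact hne (by rw [← habs u, ← habs i, h])
    · intro h
      have h3 : w u = -w i := by linarith
      exact hne (by rw [← habs u, ← habs i, h3, abs_neg])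
  -- sets
  set S := univ.filter (fun u => strictR r u i) with hS
  set F1 := univ.filter (fun u => strictR r u i ∧ w i < w u) with hF1
  set F2 := univ.filter (fun u => strictR r u i ∧ w u + w i < 0) with hF2
  have hiS : i ∉ S := by intro h; rw [hS, mem_filter] at h; exact h.2.2 rfl
  have hhook : hook r i = S.card + 1 := by
    have : univ.filter (fun u => r u i) = insert i S := by
      ext u
      rw [hS, mem_filter, mem_insert, mem_filter]
      simp only [mem_univ, true_and, strictR]
      constructor
      · intro h
        by_cases hu : u = i
        · exact Or.inl hu
        · exact Or.inr ⟨h, hu⟩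
      · rintro (rfl | ⟨h, -⟩)
        · exact hrefl
        · exact h
    rw [hook, this, card_insert_of_notMem hiS]
  have hF1S : F1 ⊆ S := by
    intro u hu; simp only [hF1, hS, mem_filter] at *; tauto
  have hF2S : F2 ⊆ S := by
    intro u hu; simp only [hF2, hS, mem_filter] at *; tauto
  have hacode : acodeF r w i = F1.card + F2.card + (if w i < 0 then 1 else 0) := rfl
  constructor
  · constructor
    · intro hneg
      have hsub : S ⊆ F1 ∪ F2 := by
        intro u hu
        simp only [hS, mem_filter, mem_univ, true_and] at hu
        obtain ⟨h1, h2⟩ := hkey u hu.2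
        simp only [hF1, hF2, mem_union, mem_filter, mem_univ, true_and]
        rcases lt_or_gt_of_ne h1 with h | h
        · exact Or.inr ⟨hu, by linarith [lt_of_le_of_ne (le_of_lt h) (by intro hh; exact h2 (by linarith))]⟩
        · exact Or.inl ⟨hu, h⟩
      have hlow : S.card ≤ F1.card + F2.card :=
        le_trans (card_le_card hsub) (card_union_le _ _)
      have hup : F1.card + F2.card ≤ 2 * S.card := by
        have := card_le_card hF1S
        have := card_le_card hF2S
        omega
      rw [hacode, if_pos hneg]
      omega
    · rintro ⟨h1, -⟩
      by_contra hpos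
      have hpos' : 0 < w i := lt_of_le_of_ne (not_lt.mp hpos) (Ne.symm (hne0 i))
      have hdisj : Disjoint F1 F2 := by
        rw [disjoint_left]
        intro u hu1 hu2
        simp only [hF1, mem_filter] at hu1
        simp only [hF2, mem_filter] at hu2
        linarith [hu1.2.2, hu2.2.2]
      have : F1.card + F2.card ≤ S.card := by
        rw [← card_union_of_disjoint hdisj]
        exact card_le_card (union_subset hF1S hF2S)
      rw [hacode, if_neg hpos] at h1
      omega
  · intro hpos
    have hdisj : Disjoint F1 F2 := by
      rw [disjoint_left]
      intro u hu1 hu2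
      simp only [hF1, mem_filter] at hu1
      simp only [hF2, mem_filter] at hu2
      linarith [hu1.2.2, hu2.2.2]
    have : F1.card + F2.card ≤ S.card := by
      rw [← card_union_of_disjoint hdisj]
      exact card_le_card (union_subset hF1S hF2S)
    rw [hacode, if_neg (by linarith)]
    omega
end
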